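/- Let t ≥ 1 and c ≥ 3 be integers and let n be an integer with n ≥ 4t² + 10t and n ≥ (t+1)c − 1. Then λ₁(D(K_{tc−1} ∨ (K_{n−(t+1)c+2} + (c−1)K₁))) ≥ n + 2. -/

import Mathlib

open SimpleGraph Finset

/-- The distance matrix of a graph: the `(i,j)` entry is the graph distance from `i` to `j`. -/
noncomputable def distMatrix {V : Type*} [Fintype V] (G : SimpleGraph V) : Matrix V V ℝ :=
  fun i j => (G.dist i j : ℝ)

/-- The distance spectral radius `λ₁(D(G))`: the largest eigenvalue of the distance matrix. -/
noncomputable def distSpecRad {V : Type*} [Fintype V] (G : SimpleGraph V) : ℝ :=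
  sSup {μ : ℝ | ∃ v : V → ℝ, v ≠ 0 ∧ (distMatrix G).mulVec v = μ • v}

/-- The join `G ∨ H` of two graphs: all edges between the parts are added. -/
def graphJoin {α β : Type*} (G : SimpleGraph α) (H : SimpleGraph β) :
    SimpleGraph (α ⊕ β) where
  Adj x y :=
    match x, y with
    | Sum.inl a, Sum.inl a' => G.Adj a a'
    | Sum.inr b, Sum.inr b' => H.Adj b b'
    | Sum.inl _, Sum.inr _ => True
    | Sum.inr _, Sum.inl _ => True
  symm := by constructor; rintro (a | a) (b | b) h <;> first | exact G.adj_symm h | exact H.adj_symm h | trivial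
  loopless := by constructor; rintro (a | a) h <;> first | exact G.irrefl h | exact H.irrefl h

/-- The disjoint union `G + H` of two graphs. -/
def graphSum {α β : Type*} (G : SimpleGraph α) (H : SimpleGraph β) :
    SimpleGraph (α ⊕ β) where
  Adj x y :=
    match x, y with
    | Sum.inl a, Sum.inl a' => G.Adj a a'
    | Sum.inr b, Sum.inr b' => H.Adj b b'
    | _, _ => False
  symm := by constructor; rintro (a | a) (b | b) h <;> first | exact G.adj_symm h | exact H.adj_symm h | exact h
  loopless := by constructor; rintro (a | a) h <;> first | exact G.irrefl h | exact H.irrefl h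

/-- `m` pairwise disjoint copies of the complete graph `K_p`. -/
def repK (m p : ℕ) : SimpleGraph (Fin m × Fin p) where
  Adj x y := x.1 = y.1 ∧ x ≠ y
  symm := ⟨fun _ _ h => ⟨h.1.symm, h.2.symm⟩⟩
  loopless := ⟨fun _ h => h.2 rfl⟩

/-- The disjoint union of cliques `K_{m 0} + K_{m 1} + ⋯`. -/
def cliquesGraph {c : ℕ} (m : Fin c → ℕ) : SimpleGraph (Σ i, Fin (m i)) where
  Adj x y := x.1 = y.1 ∧ x ≠ y
  symm := ⟨fun _ _ h => ⟨h.1.symm, h.2.symm⟩⟩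
  loopless := ⟨fun _ h => h.2 rfl⟩

/-- `G` is `t`-tough: whenever deleting a vertex set `S` disconnects the graph,
`|S| ≥ t · c(G - S)`. -/
def IsTTough {V : Type*} [Fintype V] (t : ℝ) (G : SimpleGraph V) : Prop :=
  ∀ S : Finset V, ¬ (G.induce ((S : Set V)ᶜ)).Connected →
    t * Nat.card (G.induce ((S : Set V)ᶜ)).ConnectedComponent ≤ (S.card : ℝ)


namespace St17Aux

/-! ### Arithmetic lemmas -/

private lemma helper1 (u x : ℝ) (hu : 0 ≤ u) (hx : 0 ≤ x) (h : x ≤ 4*u+5) :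
    -198 - 376*x + 87*x^2 - 2*x^3 - 744*u - 1001*u*x + 152*u*x^2 - 3*u*x^3
      - 802*u^2 - 917*u^2*x + 88*u^2*x^2 - u^2*x^3 - 336*u^3 - 352*u^3*x + 16*u^3*x^2
      - 48*u^4 - 48*u^4*x ≤ 0 := by
  have h' : 0 ≤ 4*u+5-x := by linarith
  nlinarith [mul_nonneg (mul_nonneg h' (sq_nonneg x)) hu, mul_nonneg h' (sq_nonneg x),
    mul_nonneg (mul_nonneg h' (sq_nonneg x)) (sq_nonneg u),
    mul_nonneg (mul_nonneg (mul_nonneg h' hx) hu) hu,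
    mul_nonneg (mul_nonneg h' hx) hu, mul_nonneg (mul_nonneg h' hx) (mul_nonneg hu (mul_nonneg hu hu)),
    mul_nonneg (mul_nonneg h' hx) hx, mul_nonneg h' hx]

private lemma caseB (T C S : ℝ) (ht : 1 ≤ T) (hc : 3 ≤ C) (hcb : C ≤ 4*T+4) (hs : 0 ≤ S)
    (hbig : 4*T^2+10*T+1 ≤ S + (T+1)*C) :
    27 + 26*S + 6*S^2 + 12*C - C*S - 3*C*S^2 - 2*C^2 - 4*C^2*S - C^3
      + 18*T*C + 8*T*C*S + 4*T*C^2 - 2*T*C^2*S - T*C^3 + 3*T^2*C^2 ≤ 0 := by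
  have hSL : 4*T^2+10*T+1-(T+1)*C ≤ S := by linarith
  have hFpL : 2*(6-3*C)*(4*T^2+10*T+1-(T+1)*C) + (26 - C - 4*C^2 + 8*T*C - 2*T*C^2) ≤ 0 := by
    nlinarith [mul_nonneg (sub_nonneg.2 hc) (sub_nonneg.2 ht), sq_nonneg (C-3), sq_nonneg (T-1),
      mul_nonneg (sub_nonneg.2 hcb) (sub_nonneg.2 hc), mul_nonneg (sub_nonneg.2 hcb) (sub_nonneg.2 ht),
      sq_nonneg (4*T+4-C)]
  have hFL : 59 - 30*C + 7*C^2 + T*(380 - 202*C + 33*C^2 - C^3) + T^2*(752 - 416*C + 49*C^2 - C^3)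
      + T^3*(480 - 256*C + 16*C^2) + T^4*(96 - 48*C) ≤ 0 := by
    have h1 := helper1 (T-1) (C-3) (by linarith) (by linarith) (by linarith)
    nlinarith [h1]
  nlinarith [hFL, hFpL, hSL, sq_nonneg (S - (4*T^2+10*T+1-(T+1)*C)), hc,
    mul_nonpos_of_nonpos_of_nonneg hFpL (sub_nonneg.2 hSL),
    mul_nonneg (sub_nonneg.2 hc) (sq_nonneg (S - (4*T^2+10*T+1-(T+1)*C)))]

private lemma caseA (T C S : ℝ) (ht : 1 ≤ T) (hc : 3 ≤ C) (hcb : 4*T+4 ≤ C) (hs : 0 ≤ S) :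
    27 + 26*S + 6*S^2 + 12*C - C*S - 3*C*S^2 - 2*C^2 - 4*C^2*S - C^3
      + 18*T*C + 8*T*C*S + 4*T*C^2 - 2*T*C^2*S - T*C^3 + 3*T^2*C^2 ≤ 0 := by
  have hB : 26 - C - 4*C^2 + 8*T*C - 2*T*C^2 ≤ 0 := by
    nlinarith [mul_nonneg (sub_nonneg.2 hcb) (sub_nonneg.2 ht), sq_nonneg (C - 4*T)]
  have hG : 27 + 12*C - 2*C^2 - C^3 + 18*T*C + 4*T*C^2 + 3*T^2*C^2 - T*C^3 ≤ 0 := by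
    nlinarith [mul_nonneg (sub_nonneg.2 hcb) (sub_nonneg.2 ht), sq_nonneg (C-4*T-4),
      mul_nonneg (mul_nonneg (sub_nonneg.2 hcb) (sub_nonneg.2 ht)) (le_trans (by linarith) hcb),
      sq_nonneg (T*C)]
  nlinarith [hB, hG, hs, hc, mul_nonpos_of_nonpos_of_nonneg hB hs,
    mul_nonneg (sub_nonneg.2 hc) (sq_nonneg S), sq_nonneg S]

private lemma pN2_nonpos (T C N : ℝ) (ht : 1 ≤ T) (hc : 3 ≤ C)
    (hn1 : 4*T^2+10*T ≤ N) (hn2 : (T+1)*C ≤ N+1) :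
    (N+2)^3 + 4*(N+2)^2 + 5*(N+2) + 2
      - (C-1)*(2*(N+2)^2 + 4*(N+2) + 2)
      - (N+2-(T+1)*C)*((N+2)^2 + 3*(N+2) + 2)
      - 2*(N+2-(T+1)*C)*(C-1)*((N+2)+1)
      - (T*C-1)*((N+2)^2 + 3*(N+2) + 2)
      + (T*C-1)*(C-1)*((N+2)+1)
      + (T*C-1)*(N+2-(T+1)*C)*(C-1) ≤ 0 := by
  have hs : (0:ℝ) ≤ N+1-(T+1)*C := by linarith
  rcases le_total C (4*T+4) with hcb | hcb
  · have h := caseB T C (N+1-(T+1)*C) ht hc hcb hs (by linarith)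
    nlinarith [h]
  · have h := caseA T C (N+1-(T+1)*C) ht hc hcb hs
    nlinarith [h]

private lemma p3_nonneg (a b d : ℝ) (ha : 1 ≤ a) (hb : 1 ≤ b) (hd : 1 ≤ d) :
    0 ≤ (3*(a+b+d)+3)^3 + 4*(3*(a+b+d)+3)^2 + 5*(3*(a+b+d)+3) + 2
      - d*(2*(3*(a+b+d)+3)^2 + 4*(3*(a+b+d)+3) + 2)
      - b*((3*(a+b+d)+3)^2 + 3*(3*(a+b+d)+3) + 2)
      - 2*b*d*((3*(a+b+d)+3)+1)
      - a*((3*(a+b+d)+3)^2 + 3*(3*(a+b+d)+3) + 2)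
      + a*d*((3*(a+b+d)+3)+1) + a*b*d := by
  nlinarith [mul_nonneg (sub_nonneg.2 ha) (sub_nonneg.2 hb), mul_nonneg (sub_nonneg.2 hb) (sub_nonneg.2 hd),
    mul_nonneg (sub_nonneg.2 ha) (sub_nonneg.2 hd), sq_nonneg (a+b+d), sq_nonneg (a-b), sq_nonneg (b-d),
    sq_nonneg (a-d), mul_pos (lt_of_lt_of_le one_pos ha) (lt_of_lt_of_le one_pos hb),
    mul_nonneg (mul_nonneg (sub_nonneg.2 ha) (sub_nonneg.2 hb)) (sub_nonneg.2 hd),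
    sq_nonneg (a+b-d), sq_nonneg (b+d-a), sq_nonneg (a+d-b)]

/-! ### Spectral lemmas -/

lemma bddAbove_spec {V : Type*} [Fintype V] (G : SimpleGraph V) (K : ℝ) (hK0 : 0 ≤ K)
    (hK : ∀ i j, distMatrix G i j ≤ K) :
    BddAbove {μ : ℝ | ∃ v : V → ℝ, v ≠ 0 ∧ (distMatrix G).mulVec v = μ • v} := by
  refine ⟨K * Fintype.card V, fun μ hμ => ?_⟩
  obtain ⟨v, hv, he⟩ := hμ
  have hne : Nonempty V := by
    by_contra h
    exact hv (funext fun i => absurd ⟨i⟩ h)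
  obtain ⟨i, -, hi⟩ := Finset.exists_max_image Finset.univ (fun j => |v j|) univ_nonempty
  obtain ⟨j0, hj0⟩ := Function.ne_iff.mp hv
  have hvi : 0 < |v i| := lt_of_lt_of_le (abs_pos.mpr hj0) (hi j0 (mem_univ j0))
  have h1 : (distMatrix G).mulVec v i = μ * v i := by rw [he]; rfl
  have h2 : (distMatrix G).mulVec v i = ∑ j, distMatrix G i j * v j := rfl
  have h3 : |μ| * |v i| ≤ K * Fintype.card V * |v i| := by
    rw [← abs_mul, ← h1, h2]
    calc |∑ j, distMatrix G i j * v j| ≤ ∑ j, |distMatrix G i j * v j| :=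
            Finset.abs_sum_le_sum_abs _ _
      _ ≤ ∑ _j : V, K * |v i| := by
        refine Finset.sum_le_sum fun j _ => ?_
        have hnn : (0:ℝ) ≤ distMatrix G i j := Nat.cast_nonneg _
        rw [abs_mul, abs_of_nonneg hnn]
        exact mul_le_mul (hK i j) (hi j (mem_univ j)) (abs_nonneg _) hK0
      _ = K * Fintype.card V * |v i| := by
        rw [Finset.sum_const, card_univ, nsmul_eq_mul]; ring
  have := (mul_le_mul_iff_of_pos_right hvi).mp h3
  exact le_trans (le_abs_self μ) this

lemma exists_triple (A B D μ : ℝ)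
    (hdet : (μ-(A-1)) * ((μ-(B-1))*(μ-(2*D-2)) - (-(2*D))*(-(2*B)))
      - (-B)*((-A)*(μ-(2*D-2)) - (-(2*D))*(-A))
      + (-D)*((-A)*(-(2*B)) - (μ-(B-1))*(-A)) = 0) :
    ∃ x y z : ℝ, ¬(x = 0 ∧ y = 0 ∧ z = 0) ∧
      (A-1)*x + B*y + D*z = μ*x ∧
      A*x + (B-1)*y + 2*D*z = μ*y ∧
      A*x + 2*B*y + (2*D-2)*z = μ*z := by
  set M : Matrix (Fin 3) (Fin 3) ℝ :=
    !![μ-(A-1), -B, -D; -A, μ-(B-1), -(2*D); -A, -(2*B), μ-(2*D-2)] with hM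
  have hMdet : M.det = 0 := by
    rw [Matrix.det_fin_three]
    simp only [hM, Matrix.of_apply, Matrix.cons_val', Matrix.cons_val_zero, Matrix.cons_val_one,
      Matrix.cons_val_two, Matrix.head_cons, Matrix.tail_cons, Matrix.empty_val',
      Matrix.cons_val_fin_one, Matrix.head_fin_const]
    linear_combination hdet
  obtain ⟨v, hv, hmv⟩ := Matrix.exists_mulVec_eq_zero_iff.mpr hMdet
  refine ⟨v 0, v 1, v 2, ?_, ?_, ?_, ?_⟩
  · rintro ⟨h0, h1, h2⟩
    apply hv
    funext i
    fin_cases i <;> assumption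
  · have := congrFun hmv 0
    simp [hM, Matrix.mulVec, dotProduct, Fin.sum_univ_three] at this
    linarith
  · have := congrFun hmv 1
    simp [hM, Matrix.mulVec, dotProduct, Fin.sum_univ_three] at this
    linarith
  · have := congrFun hmv 2
    simp [hM, Matrix.mulVec, dotProduct, Fin.sum_univ_three] at this
    linarith

/-! ### The graph and its distance matrix -/

abbrev GG (a b d : ℕ) : SimpleGraph (Fin a ⊕ (Fin b ⊕ Fin d)) :=
  graphJoin (⊤ : SimpleGraph (Fin a)) (graphSum (⊤ : SimpleGraph (Fin b)) (⊥ : SimpleGraph (Fin d)))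

variable {a b d : ℕ}

lemma dist_eq_two' {V : Type*} {G : SimpleGraph V} {x y w : V} (hne : x ≠ y)
    (hnadj : ¬ G.Adj x y) (h1 : G.Adj x w) (h2 : G.Adj w y) : G.dist x y = 2 := by
  have hle := SimpleGraph.dist_le (SimpleGraph.Walk.cons h1 (SimpleGraph.Walk.cons h2 SimpleGraph.Walk.nil))
  simp only [SimpleGraph.Walk.length_cons, SimpleGraph.Walk.length_nil] at hle
  have hpos := SimpleGraph.Reachable.pos_dist_of_ne
    ⟨SimpleGraph.Walk.cons h1 (SimpleGraph.Walk.cons h2 SimpleGraph.Walk.nil)⟩ hne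
  have h1' : G.dist x y ≠ 1 := fun h => hnadj (SimpleGraph.dist_eq_one_iff_adj.mp h)
  omega

lemma adj_ll {i j : Fin a} (h : i ≠ j) : (GG a b d).Adj (.inl i) (.inl j) := h
lemma adj_lr {i : Fin a} {j : Fin b ⊕ Fin d} : (GG a b d).Adj (.inl i) (.inr j) := trivial
lemma adj_rl {i : Fin a} {j : Fin b ⊕ Fin d} : (GG a b d).Adj (.inr j) (.inl i) := trivial
lemma adj_bb {i j : Fin b} (h : i ≠ j) : (GG a b d).Adj (.inr (.inl i)) (.inr (.inl j)) := h
lemma nadj_bc {i : Fin b} {j : Fin d} : ¬ (GG a b d).Adj (.inr (.inl i)) (.inr (.inr j)) := id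
lemma nadj_cb {i : Fin d} {j : Fin b} : ¬ (GG a b d).Adj (.inr (.inr i)) (.inr (.inl j)) := id
lemma nadj_cc {i j : Fin d} : ¬ (GG a b d).Adj (.inr (.inr i)) (.inr (.inr j)) := id

lemma dm_ll (i j : Fin a) :
    distMatrix (GG a b d) (.inl i) (.inl j) = if i = j then 0 else 1 := by
  unfold distMatrix
  split
  · subst ‹i = j›; rw [SimpleGraph.dist_self]; norm_num
  · rw [SimpleGraph.dist_eq_one_iff_adj.mpr (adj_ll ‹i ≠ j›)]; norm_num

lemma dm_lr (i : Fin a) (j : Fin b ⊕ Fin d) :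
    distMatrix (GG a b d) (.inl i) (.inr j) = 1 := by
  unfold distMatrix
  rw [SimpleGraph.dist_eq_one_iff_adj.mpr adj_lr]; norm_num

lemma dm_rl (i : Fin b ⊕ Fin d) (j : Fin a) :
    distMatrix (GG a b d) (.inr i) (.inl j) = 1 := by
  unfold distMatrix
  rw [SimpleGraph.dist_eq_one_iff_adj.mpr adj_rl]; norm_num

lemma dm_bb (i j : Fin b) :
    distMatrix (GG a b d) (.inr (.inl i)) (.inr (.inl j)) = if i = j then 0 else 1 := by
  unfold distMatrix
  split
  · subst ‹i = j›; rw [SimpleGraph.dist_self]; norm_num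
  · rw [SimpleGraph.dist_eq_one_iff_adj.mpr (adj_bb ‹i ≠ j›)]; norm_num

lemma dm_bc (ha : 0 < a) (i : Fin b) (j : Fin d) :
    distMatrix (GG a b d) (.inr (.inl i)) (.inr (.inr j)) = 2 := by
  unfold distMatrix
  rw [dist_eq_two' (by simp) nadj_bc (adj_rl (i := ⟨0, ha⟩)) adj_lr]; norm_num

lemma dm_cb (ha : 0 < a) (i : Fin d) (j : Fin b) :
    distMatrix (GG a b d) (.inr (.inr i)) (.inr (.inl j)) = 2 := by
  unfold distMatrix
  rw [dist_eq_two' (by simp) nadj_cb (adj_rl (i := ⟨0, ha⟩)) adj_lr]; norm_num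

lemma dm_cc (ha : 0 < a) (i j : Fin d) :
    distMatrix (GG a b d) (.inr (.inr i)) (.inr (.inr j)) = if i = j then 0 else 2 := by
  unfold distMatrix
  split
  · subst ‹i = j›; rw [SimpleGraph.dist_self]; norm_num
  · rw [dist_eq_two' (by simp [‹i ≠ j›]) nadj_cc (adj_rl (i := ⟨0, ha⟩)) adj_lr]; norm_num

lemma sum_offdiag {m : ℕ} (i : Fin m) (r : ℝ) :
    ∑ j : Fin m, (if i = j then 0 else r) = (m:ℝ)*r - r := by
  have h : ∀ j : Fin m, (if i = j then (0:ℝ) else r) = r - (if i = j then r else 0) :=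
    fun j => by split <;> ring
  simp_rw [h]
  rw [Finset.sum_sub_distrib, Finset.sum_const, Finset.sum_ite_eq]
  simp [mul_comm]

lemma mulVec_lift (ha : 0 < a) (x y z : ℝ) (i : Fin a ⊕ (Fin b ⊕ Fin d)) :
    (distMatrix (GG a b d)).mulVec
        (Sum.elim (fun _ => x) (Sum.elim (fun _ => y) (fun _ => z))) i =
      Sum.elim (fun _ : Fin a => ((a:ℝ)*x - x) + (b:ℝ)*y + (d:ℝ)*z)
        (Sum.elim (fun _ : Fin b => (a:ℝ)*x + ((b:ℝ)*y - y) + (d:ℝ)*(2*z))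
          (fun _ : Fin d => (a:ℝ)*x + (b:ℝ)*(2*y) + ((d:ℝ)*(2*z) - 2*z))) i := by
  have hmv : (distMatrix (GG a b d)).mulVec
      (Sum.elim (fun _ => x) (Sum.elim (fun _ => y) (fun _ => z))) i
      = ∑ j, distMatrix (GG a b d) i j *
          (Sum.elim (fun _ => x) (Sum.elim (fun _ => y) (fun _ => z)) j) := rfl
  rw [hmv, Fintype.sum_sum_type]
  rcases i with i | i | i
  · simp only [Sum.elim_inl, Sum.elim_inr, Fintype.sum_sum_type, dm_ll, dm_lr,
      ite_mul, zero_mul, one_mul]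
    rw [sum_offdiag, Finset.sum_const, Finset.sum_const, card_univ, card_univ]
    simp [Fintype.card_fin, nsmul_eq_mul]
    ring
  · simp only [Sum.elim_inl, Sum.elim_inr, Fintype.sum_sum_type, dm_rl, dm_bb,
      dm_bc ha, ite_mul, zero_mul, one_mul]
    rw [sum_offdiag, Finset.sum_const, Finset.sum_const, card_univ, card_univ]
    simp [Fintype.card_fin, nsmul_eq_mul]
    ring
  · simp only [Sum.elim_inl, Sum.elim_inr, Fintype.sum_sum_type, dm_rl, dm_cb ha,
      dm_cc ha, ite_mul, zero_mul, one_mul]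
    rw [sum_offdiag, Finset.sum_const, Finset.sum_const, card_univ, card_univ]
    simp [Fintype.card_fin, nsmul_eq_mul]
    ring

lemma eigen_mem (ha : 0 < a) (hb : 0 < b) (hd : 0 < d) (mu x y z : ℝ)
    (hnz : ¬(x = 0 ∧ y = 0 ∧ z = 0))
    (e1 : ((a:ℝ)-1)*x + (b:ℝ)*y + (d:ℝ)*z = mu*x)
    (e2 : (a:ℝ)*x + ((b:ℝ)-1)*y + 2*(d:ℝ)*z = mu*y)
    (e3 : (a:ℝ)*x + 2*(b:ℝ)*y + (2*(d:ℝ)-2)*z = mu*z) :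
    ∃ v : (Fin a ⊕ (Fin b ⊕ Fin d)) → ℝ, v ≠ 0 ∧
      (distMatrix (GG a b d)).mulVec v = mu • v := by
  refine ⟨Sum.elim (fun _ => x) (Sum.elim (fun _ => y) (fun _ => z)), ?_, ?_⟩
  · intro h0
    exact hnz ⟨congrFun h0 (Sum.inl ⟨0, ha⟩), congrFun h0 (Sum.inr (Sum.inl ⟨0, hb⟩)),
      congrFun h0 (Sum.inr (Sum.inr ⟨0, hd⟩))⟩
  · funext i
    rw [mulVec_lift ha x y z i]
    rcases i with i | i | i
    · simp only [Sum.elim_inl, Pi.smul_apply, smul_eq_mul]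
      linarith [e1]
    · simp only [Sum.elim_inl, Sum.elim_inr, Pi.smul_apply, smul_eq_mul]
      linarith [e2]
    · simp only [Sum.elim_inr, Pi.smul_apply, smul_eq_mul]
      linarith [e3]

lemma dm_le_two (ha : 0 < a) (i j : Fin a ⊕ (Fin b ⊕ Fin d)) :
    distMatrix (GG a b d) i j ≤ 2 := by
  rcases i with i | i | i <;> rcases j with j | j | j
  · rw [dm_ll]; split <;> norm_num
  · rw [dm_lr]; norm_num
  · rw [dm_lr]; norm_num
  · rw [dm_rl]; norm_num
  · rw [dm_bb]; split <;> norm_num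
  · rw [dm_bc ha]
  · rw [dm_rl]; norm_num
  · rw [dm_cb ha]
  · rw [dm_cc ha]; split <;> norm_num

end St17Aux

open St17Aux in
theorem stmt17 (t c n : ℕ) (ht : 1 ≤ t) (hc : 3 ≤ c)
    (hn1 : 4 * t ^ 2 + 10 * t ≤ n) (hn2 : (t + 1) * c ≤ n + 1) :
    (n : ℝ) + 2 ≤
      distSpecRad (graphJoin (⊤ : SimpleGraph (Fin (t * c - 1)))
        (graphSum (⊤ : SimpleGraph (Fin (n + 2 - (t + 1) * c)))
          (⊥ : SimpleGraph (Fin (c - 1))))) := by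
  have h3c : c ≤ t * c := by
    calc c = 1 * c := (one_mul c).symm
    _ ≤ t * c := Nat.mul_le_mul_right c ht
  have ha : 0 < t * c - 1 := by omega
  have hb : 0 < n + 2 - (t + 1) * c := by omega
  have hd : 0 < c - 1 := by omega
  have hT : (1:ℝ) ≤ (t:ℝ) := by exact_mod_cast ht
  have hC : (3:ℝ) ≤ (c:ℝ) := by exact_mod_cast hc
  have hN1 : 4*(t:ℝ)^2 + 10*(t:ℝ) ≤ (n:ℝ) := by exact_mod_cast hn1
  have hN2 : ((t:ℝ)+1)*(c:ℝ) ≤ (n:ℝ)+1 := by exact_mod_cast hn2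
  have hA : ((t * c - 1 : ℕ) : ℝ) = (t:ℝ)*(c:ℝ) - 1 := by
    rw [Nat.cast_sub (by omega)]; push_cast; ring
  have hB : ((n + 2 - (t + 1) * c : ℕ) : ℝ) = (n:ℝ) + 2 - ((t:ℝ)+1)*(c:ℝ) := by
    rw [Nat.cast_sub (by omega)]; push_cast; ring
  have hD : ((c - 1 : ℕ) : ℝ) = (c:ℝ) - 1 := by
    rw [Nat.cast_sub (by omega)]; push_cast; ring
  set Aa : ℝ := (t:ℝ)*(c:ℝ) - 1 with hAa
  set Bb : ℝ := (n:ℝ) + 2 - ((t:ℝ)+1)*(c:ℝ) with hBb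
  set Dd : ℝ := (c:ℝ) - 1 with hDd
  have hA1 : (1:ℝ) ≤ Aa := by rw [hAa]; nlinarith
  have hB1 : (1:ℝ) ≤ Bb := by rw [hBb]; linarith
  have hD1 : (1:ℝ) ≤ Dd := by rw [hDd]; linarith
  have hp1 : ((n:ℝ)+2)^3 + 4*((n:ℝ)+2)^2 + 5*((n:ℝ)+2) + 2 - Dd*(2*((n:ℝ)+2)^2 + 4*((n:ℝ)+2) + 2)
      - Bb*(((n:ℝ)+2)^2 + 3*((n:ℝ)+2) + 2) - 2*Bb*Dd*(((n:ℝ)+2)+1) - Aa*(((n:ℝ)+2)^2 + 3*((n:ℝ)+2) + 2)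
      + Aa*Dd*(((n:ℝ)+2)+1) + Aa*Bb*Dd ≤ 0 := by
    have h := pN2_nonpos (t:ℝ) (c:ℝ) (n:ℝ) hT hC hN1 hN2
    simp only [hAa, hBb, hDd]
    linarith [h]
  have hp2 : 0 ≤ (3*(n:ℝ)+3)^3 + 4*(3*(n:ℝ)+3)^2 + 5*(3*(n:ℝ)+3) + 2 - Dd*(2*(3*(n:ℝ)+3)^2 + 4*(3*(n:ℝ)+3) + 2)
      - Bb*((3*(n:ℝ)+3)^2 + 3*(3*(n:ℝ)+3) + 2) - 2*Bb*Dd*((3*(n:ℝ)+3)+1) - Aa*((3*(n:ℝ)+3)^2 + 3*(3*(n:ℝ)+3) + 2)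
      + Aa*Dd*((3*(n:ℝ)+3)+1) + Aa*Bb*Dd := by
    have h := p3_nonneg Aa Bb Dd hA1 hB1 hD1
    simp only [hAa, hBb, hDd] at h ⊢
    linarith [h]
  have hcont : Continuous (fun m : ℝ => m^3 + 4*m^2 + 5*m + 2 - Dd*(2*m^2 + 4*m + 2)
      - Bb*(m^2 + 3*m + 2) - 2*Bb*Dd*(m+1) - Aa*(m^2 + 3*m + 2)
      + Aa*Dd*(m+1) + Aa*Bb*Dd) := by fun_prop
  have hle : (n:ℝ)+2 ≤ 3*(n:ℝ)+3 := by
    have := Nat.cast_nonneg (α := ℝ) n; linarith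
  obtain ⟨r, hrI, hPr⟩ := intermediate_value_Icc hle hcont.continuousOn ⟨hp1, hp2⟩
  have hPr' : r^3 + 4*r^2 + 5*r + 2 - Dd*(2*r^2 + 4*r + 2)
      - Bb*(r^2 + 3*r + 2) - 2*Bb*Dd*(r+1) - Aa*(r^2 + 3*r + 2)
      + Aa*Dd*(r+1) + Aa*Bb*Dd = 0 := hPr
  have hdet : (r-(Aa-1)) * ((r-(Bb-1))*(r-(2*Dd-2)) - (-(2*Dd))*(-(2*Bb)))
      - (-Bb)*((-Aa)*(r-(2*Dd-2)) - (-(2*Dd))*(-Aa))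
      + (-Dd)*((-Aa)*(-(2*Bb)) - (r-(Bb-1))*(-Aa)) = 0 := by
    linear_combination hPr'
  obtain ⟨x, y, z, hnz, e1, e2, e3⟩ := exists_triple Aa Bb Dd r hdet
  have e1' : (((t * c - 1 : ℕ):ℝ)-1)*x + ((n + 2 - (t + 1) * c : ℕ):ℝ)*y
      + ((c - 1 : ℕ):ℝ)*z = r*x := by rw [hA, hB, hD]; linarith [e1]
  have e2' : ((t * c - 1 : ℕ):ℝ)*x + (((n + 2 - (t + 1) * c : ℕ):ℝ)-1)*y
      + 2*((c - 1 : ℕ):ℝ)*z = r*y := by rw [hA, hB, hD]; linarith [e2]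
  have e3' : ((t * c - 1 : ℕ):ℝ)*x + 2*((n + 2 - (t + 1) * c : ℕ):ℝ)*y
      + (2*((c - 1 : ℕ):ℝ)-2)*z = r*z := by rw [hA, hB, hD]; linarith [e3]
  have hmem : r ∈ {μ : ℝ | ∃ v : (Fin (t * c - 1) ⊕ (Fin (n + 2 - (t + 1) * c) ⊕ Fin (c - 1))) → ℝ,
      v ≠ 0 ∧ (distMatrix (GG (t * c - 1) (n + 2 - (t + 1) * c) (c - 1))).mulVec v = r • v} :=
    eigen_mem ha hb hd r x y z hnz e1' e2' e3'
  have hbdd := bddAbove_spec (GG (t * c - 1) (n + 2 - (t + 1) * c) (c - 1)) 2 (by norm_num)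
    (dm_le_two ha)
  have hfin : r ≤ distSpecRad (GG (t * c - 1) (n + 2 - (t + 1) * c) (c - 1)) :=
    le_csSup hbdd hmem
  calc (n:ℝ) + 2 ≤ r := hrI.1
  _ ≤ _ := hfin
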